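/- Let i ≥ 1 and let G_i be as above. Then the number of connected convex sets of G_i is at most 2·3^i + 3i + 1, while the number of convex sets of G_i is at least 4^i − 1. Consequently, the ratio cc(G_i)/co(G_i) tends to 0 as i → ∞. -/

import Mathlib

/-!
Digraphs are given by an arc relation `A : V → V → Prop` on a vertex type `V`.
A directed path from `a` to `b` is encoded as `a :: (l ++ [b])` where the list
satisfies `List.Chain A` (consecutive arcs) and `List.Nodup` (distinct vertices);
`l` is the list of internal vertices.
-/

variable {V : Type*}

/-- A non-empty vertex set `X` is convex if no directed path between two
vertices of `X` contains a vertex not in `X`. -/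
def ConvexIn (A : V → V → Prop) (X : Set V) : Prop :=
  X.Nonempty ∧ ∀ a b : V, ∀ l : List V, a ∈ X → b ∈ X →
    List.Chain A a (l ++ [b]) → (a :: (l ++ [b])).Nodup → ∀ w ∈ l, w ∈ X

/-- A vertex set is connected if the underlying undirected graph induced on it
is connected. -/
def ConnectedIn (A : V → V → Prop) (X : Set V) : Prop :=
  ((SimpleGraph.fromRel A).induce X).Connected

/-- A digraph is acyclic if it has no directed cycle, equivalently no
nontrivial directed closed walk. -/
def AcyclicDigraph (A : V → V → Prop) : Prop :=
  ∀ v, ¬ Relation.TransGen A v v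

/-- A digraph is connected if its underlying undirected graph is connected. -/
def DigraphConnected (A : V → V → Prop) : Prop :=
  (SimpleGraph.fromRel A).Connected

/-- A source is a vertex with in-degree zero. -/
def IsSourceIn (A : V → V → Prop) (v : V) : Prop := ∀ u, ¬ A u v

/-- A sink is a vertex with out-degree zero. -/
def IsSinkIn (A : V → V → Prop) (v : V) : Prop := ∀ u, ¬ A v u

/-- A cut-vertex of a connected digraph: deleting it disconnects the
underlying undirected graph. -/
def IsCutVertexIn (A : V → V → Prop) (v : V) : Prop :=
  ¬ ((SimpleGraph.fromRel A).induce {u | u ≠ v}).Connected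

/-- Vertices of the digraph `G_i`: a source `s`, a sink `t`, and internal
vertices `a j`, `b j` on the `j`-th path, for `j : Fin i`. -/
inductive GV (i : ℕ) : Type
  | s : GV i
  | t : GV i
  | a : Fin i → GV i
  | b : Fin i → GV i
deriving DecidableEq

/-- Arcs of `G_i`: `s → a j`, `a j → b j`, `b j → t` for each `j`. -/
def GAdj {i : ℕ} : GV i → GV i → Prop
  | GV.s, GV.a _ => True
  | GV.a j, GV.b k => j = k
  | GV.b _, GV.t => True
  | _, _ => False

section Aux

instance {i : ℕ} : Finite (GV i) := by
  apply Finite.of_surjective (fun x : Unit ⊕ Unit ⊕ Fin i ⊕ Fin i =>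
    match x with
    | .inl _ => GV.s
    | .inr (.inl _) => GV.t
    | .inr (.inr (.inl j)) => GV.a j
    | .inr (.inr (.inr j)) => GV.b j)
  rintro (_|_|j|j)
  · exact ⟨.inl (), rfl⟩
  · exact ⟨.inr (.inl ()), rfl⟩
  · exact ⟨.inr (.inr (.inl j)), rfl⟩
  · exact ⟨.inr (.inr (.inr j)), rfl⟩

lemma gadj_a {i : ℕ} {j : Fin i} {v : GV i} (h : GAdj (GV.a j) v) : v = GV.b j := by
  cases v <;> simp [GAdj] at h ⊢; exact h.symm

lemma gadj_b {i : ℕ} {j : Fin i} {v : GV i} (h : GAdj (GV.b j) v) : v = GV.t := by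
  cases v <;> simp [GAdj] at h ⊢

lemma gadj_t {i : ℕ} {v : GV i} (h : GAdj GV.t v) : False := by
  cases v <;> simp [GAdj] at h

lemma chain_no_internal {i : ℕ} {x y : GV i} {l : List (GV i)}
    (hx : x ≠ GV.s ∧ x ≠ GV.t) (hy : y ≠ GV.s ∧ y ≠ GV.t)
    (h : List.Chain GAdj x (l ++ [y])) : l = [] := by
  have ht_chain : ∀ (l' : List (GV i)), ¬ List.Chain GAdj GV.t (l' ++ [y]) := by
    intro l' hc
    cases l' with
    | nil => rw [List.nil_append] at hc; simp only [List.Chain] at hc; rw [List.chain_cons] at hc; exact gadj_t hc.1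
    | cons z l'' => rw [List.cons_append] at hc; simp only [List.Chain] at hc; rw [List.chain_cons] at hc; exact gadj_t hc.1
  cases x with
  | s => exact absurd rfl hx.1
  | t => exact absurd rfl hx.2
  | a j =>
    cases l with
    | nil => rfl
    | cons z l' =>
      rw [List.cons_append] at h
      simp only [List.Chain] at h
      rw [List.chain_cons] at h
      have hz := gadj_a h.1
      subst hz
      cases l' with
      | nil =>
        rw [List.nil_append, List.chain_cons] at h
        have := gadj_b h.2.1
        exact absurd this hy.2
      | cons w l'' =>
        rw [List.cons_append, List.chain_cons] at h
        have hw := gadj_b h.2.1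
        subst hw
        exact absurd h.2.2 (ht_chain l'')
  | b j =>
    cases l with
    | nil => rfl
    | cons z l' =>
      rw [List.cons_append] at h
      simp only [List.Chain] at h
      rw [List.chain_cons] at h
      have hz := gadj_b h.1
      subst hz
      exact absurd h.2 (ht_chain l')

lemma convex_of_ab {i : ℕ} {X : Set (GV i)} (hne : X.Nonempty)
    (hX : ∀ v ∈ X, v ≠ GV.s ∧ v ≠ GV.t) : ConvexIn GAdj X := by
  refine ⟨hne, fun a b l ha hb hch _ w hw => ?_⟩
  rw [chain_no_internal (hX a ha) (hX b hb) hch] at hw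
  simp at hw

/-- idx of a/b vertices -/
def gidx {i : ℕ} : GV i → ℕ
  | GV.a j => j.val
  | GV.b j => j.val
  | _ => 0

lemma idx_const {i : ℕ} {X : Set (GV i)} (hs : GV.s ∉ X) (ht : GV.t ∉ X)
    (hc : ConnectedIn GAdj X) {x y : GV i} (hx : x ∈ X) (hy : y ∈ X) :
    gidx x = gidx y := by
  have step : ∀ u v : ↥X, ((SimpleGraph.fromRel GAdj).induce X).Adj u v →
      gidx u.1 = gidx v.1 := by
    rintro ⟨u, hu⟩ ⟨v, hv⟩ hadj
    simp only [SimpleGraph.comap_adj, SimpleGraph.fromRel_adj] at hadj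
    obtain ⟨-, h | h⟩ := hadj <;>
    · cases u <;> cases v <;> simp_all [GAdj, gidx] <;>
        first
          | exact absurd hu hs | exact absurd hv hs
          | exact absurd hu ht | exact absurd hv ht
  suffices H : ∀ u v : ↥X, ((SimpleGraph.fromRel GAdj).induce X).Reachable u v →
      gidx u.1 = gidx v.1 from H ⟨x, hx⟩ ⟨y, hy⟩ (hc.preconnected _ _)
  intro u v h
  obtain ⟨w⟩ := h
  induction w with
  | nil => rfl
  | cons h p ih => exact (step _ _ h).trans ih

def gdec {i : ℕ} : (Fin i × Fin 3) ⊕ (Fin i → Fin 3) ⊕ (Fin i → Fin 3) ⊕ Unit → Set (GV i)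
  | .inl (j, k) =>
      if k = 0 then {GV.a j} else if k = 1 then {GV.b j} else {GV.a j, GV.b j}
  | .inr (.inl f) => fun v => match v with
      | GV.s => True | GV.t => False | GV.a j => f j ≠ 0 | GV.b j => f j = 2
  | .inr (.inr (.inl f)) => fun v => match v with
      | GV.s => False | GV.t => True | GV.a j => f j = 2 | GV.b j => f j ≠ 0
  | .inr (.inr (.inr _)) => Set.univ

lemma cc_sub_range {i : ℕ} :
    {X : Set (GV i) | ConnectedIn GAdj X ∧ ConvexIn GAdj X} ⊆ Set.range gdec := by
  classical
  rintro X ⟨hconn, hne, hcvx⟩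
  by_cases hs : GV.s ∈ X <;> by_cases ht : GV.t ∈ X
  · -- both: X = univ
    refine ⟨.inr (.inr (.inr ⟨⟩)), ?_⟩
    simp only [gdec]
    refine (Set.eq_univ_iff_forall.2 fun v => ?_).symm
    have key : ∀ j : Fin i, GV.a j ∈ X ∧ GV.b j ∈ X := by
      intro j
      have hch : List.Chain GAdj GV.s ([GV.a j, GV.b j] ++ [GV.t]) := by
        simp [List.Chain, List.chain_cons, GAdj]
      have hnd : (GV.s :: ([GV.a j, GV.b j] ++ [GV.t])).Nodup := by simp
      have := hcvx GV.s GV.t [GV.a j, GV.b j] hs ht hch hnd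
      exact ⟨this _ (by simp), this _ (by simp)⟩
    cases v with
    | s => exact hs
    | t => exact ht
    | a j => exact (key j).1
    | b j => exact (key j).2
  · -- s ∈ X, t ∉ X
    refine ⟨.inr (.inl fun j => if GV.b j ∈ X then 2 else if GV.a j ∈ X then 1 else 0), ?_⟩
    ext v
    simp only [gdec]
    cases v with
    | s => exact iff_of_true trivial hs
    | t => exact iff_of_false (fun h => h) ht
    | a j =>
      show (if GV.b j ∈ X then (2:Fin 3) else if GV.a j ∈ X then 1 else 0) ≠ 0 ↔ GV.a j ∈ X
      by_cases hb : GV.b j ∈ X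
      · have hch : List.Chain GAdj GV.s ([GV.a j] ++ [GV.b j]) := by
          simp [List.Chain, List.chain_cons, GAdj]
        have hnd : (GV.s :: ([GV.a j] ++ [GV.b j])).Nodup := by simp
        have haj : GV.a j ∈ X := hcvx GV.s (GV.b j) [GV.a j] hs hb hch hnd _ (by simp)
        rw [if_pos hb]
        exact iff_of_true (by decide) haj
      · rw [if_neg hb]
        by_cases ha : GV.a j ∈ X
        · rw [if_pos ha]; exact iff_of_true (by decide) ha
        · rw [if_neg ha]; exact iff_of_false (by simp) ha
    | b j =>
      show (if GV.b j ∈ X then (2:Fin 3) else if GV.a j ∈ X then 1 else 0) = 2 ↔ GV.b j ∈ X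
      by_cases hb : GV.b j ∈ X
      · rw [if_pos hb]; exact iff_of_true rfl hb
      · rw [if_neg hb]
        by_cases ha : GV.a j ∈ X
        · rw [if_pos ha]; exact iff_of_false (by decide) hb
        · rw [if_neg ha]; exact iff_of_false (by decide) hb
  · -- t ∈ X, s ∉ X
    refine ⟨.inr (.inr (.inl fun j => if GV.a j ∈ X then 2 else if GV.b j ∈ X then 1 else 0)), ?_⟩
    ext v
    simp only [gdec]
    cases v with
    | s => exact iff_of_false (fun h => h) hs
    | t => exact iff_of_true trivial ht
    | a j =>
      show (if GV.a j ∈ X then (2:Fin 3) else if GV.b j ∈ X then 1 else 0) = 2 ↔ GV.a j ∈ X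
      by_cases ha : GV.a j ∈ X
      · rw [if_pos ha]; exact iff_of_true rfl ha
      · rw [if_neg ha]
        by_cases hb : GV.b j ∈ X
        · rw [if_pos hb]; exact iff_of_false (by decide) ha
        · rw [if_neg hb]; exact iff_of_false (by decide) ha
    | b j =>
      show (if GV.a j ∈ X then (2:Fin 3) else if GV.b j ∈ X then 1 else 0) ≠ 0 ↔ GV.b j ∈ X
      by_cases ha : GV.a j ∈ X
      · have hch : List.Chain GAdj (GV.a j) ([GV.b j] ++ [GV.t]) := by
          simp [List.Chain, List.chain_cons, GAdj]
        have hnd : (GV.a j :: ([GV.b j] ++ [GV.t])).Nodup := by simp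
        have hbj : GV.b j ∈ X := hcvx (GV.a j) GV.t [GV.b j] ha ht hch hnd _ (by simp)
        rw [if_pos ha]
        exact iff_of_true (by decide) hbj
      · rw [if_neg ha]
        by_cases hb : GV.b j ∈ X
        · rw [if_pos hb]; exact iff_of_true (by decide) hb
        · rw [if_neg hb]; exact iff_of_false (by simp) hb
  · -- neither
    obtain ⟨x, hx⟩ := hne
    have hmem : ∀ y ∈ X, ∃ k : Fin i, y = GV.a k ∨ y = GV.b k := by
      intro y hy
      cases y with
      | s => exact absurd hy hs
      | t => exact absurd hy ht
      | a k => exact ⟨k, Or.inl rfl⟩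
      | b k => exact ⟨k, Or.inr rfl⟩
    obtain ⟨j, hj⟩ := hmem x hx
    have hsub : X ⊆ {GV.a j, GV.b j} := by
      intro y hy
      have hidx := idx_const hs ht hconn hx hy
      obtain ⟨k, hk⟩ := hmem y hy
      have hkj : k = j := by
        apply Fin.ext
        have h1 : gidx y = k.val := by rcases hk with rfl | rfl <;> rfl
        have h2 : gidx x = j.val := by rcases hj with rfl | rfl <;> rfl
        rw [← h1, ← hidx, h2]
      subst hkj
      rcases hk with rfl | rfl <;> simp
    by_cases ha : GV.a j ∈ X <;> by_cases hb : GV.b j ∈ X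
    · refine ⟨.inl (j, 2), ?_⟩
      simp only [gdec]
      norm_num
      exact (subset_antisymm hsub (by rintro y (rfl | rfl) <;> assumption)).symm
    · refine ⟨.inl (j, 0), ?_⟩
      simp only [gdec, if_pos rfl]
      refine (subset_antisymm ?_ (by rintro y rfl; exact ha)).symm
      intro y hy
      rcases hsub hy with rfl | rfl
      · rfl
      · exact absurd hy hb
    · refine ⟨.inl (j, 1), ?_⟩
      norm_num [gdec]
      refine (subset_antisymm ?_ (by rintro y rfl; exact hb)).symm
      intro y hy
      rcases hsub hy with rfl | rfl
      · exact absurd hy ha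
      · rfl
    · rcases hsub hx with rfl | rfl
      · exact absurd hx ha
      · exact absurd hx hb

lemma cc_bound (i : ℕ) :
    {X : Set (GV i) | ConnectedIn GAdj X ∧ ConvexIn GAdj X}.ncard ≤
      2 * 3 ^ i + 3 * i + 1 := by
  have h1 : {X : Set (GV i) | ConnectedIn GAdj X ∧ ConvexIn GAdj X}.ncard ≤
      (Set.range (gdec (i := i))).ncard :=
    Set.ncard_le_ncard cc_sub_range (Set.toFinite _)
  have h2 : (Set.range (gdec (i := i))).ncard ≤
      Nat.card ((Fin i × Fin 3) ⊕ (Fin i → Fin 3) ⊕ (Fin i → Fin 3) ⊕ Unit) := by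
    rw [← Set.image_univ, ← Set.ncard_univ]
    exact Set.ncard_image_le (Set.toFinite _)
  have h3 : Nat.card ((Fin i × Fin 3) ⊕ (Fin i → Fin 3) ⊕ (Fin i → Fin 3) ⊕ Unit) =
      2 * 3 ^ i + 3 * i + 1 := by
    simp [Nat.card_eq_fintype_card, Fintype.card_fun]
    ring
  omega

def gh {i : ℕ} (f : Fin i → Fin 4) : Set (GV i) :=
  {v | ∃ k, (v = GV.a k ∧ (f k = 1 ∨ f k = 3)) ∨ (v = GV.b k ∧ (f k = 2 ∨ f k = 3))}

lemma gh_inj {i : ℕ} : Function.Injective (gh (i := i)) := by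
  intro f g hfg
  funext j
  have hA := Set.ext_iff.1 hfg (GV.a j)
  have hB := Set.ext_iff.1 hfg (GV.b j)
  simp only [gh, Set.mem_setOf_eq, GV.a.injEq, GV.b.injEq] at hA hB
  have hA' : (f j = 1 ∨ f j = 3) ↔ (g j = 1 ∨ g j = 3) := by
    constructor
    · intro h; rcases (hA.1 ⟨j, Or.inl ⟨rfl, h⟩⟩) with ⟨k, ⟨hk, h'⟩ | ⟨hk, h'⟩⟩
      · cases hk; exact h'
      · exact absurd hk (by intro h; cases h)
    · intro h; rcases (hA.2 ⟨j, Or.inl ⟨rfl, h⟩⟩) with ⟨k, ⟨hk, h'⟩ | ⟨hk, h'⟩⟩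
      · cases hk; exact h'
      · exact absurd hk (by intro h; cases h)
  have hB' : (f j = 2 ∨ f j = 3) ↔ (g j = 2 ∨ g j = 3) := by
    constructor
    · intro h; rcases (hB.1 ⟨j, Or.inr ⟨rfl, h⟩⟩) with ⟨k, ⟨hk, h'⟩ | ⟨hk, h'⟩⟩
      · exact absurd hk (by intro h; cases h)
      · cases hk; exact h'
    · intro h; rcases (hB.2 ⟨j, Or.inr ⟨rfl, h⟩⟩) with ⟨k, ⟨hk, h'⟩ | ⟨hk, h'⟩⟩
      · exact absurd hk (by intro h; cases h)
      · cases hk; exact h'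
  revert hA' hB'
  generalize f j = x; generalize g j = y
  revert x y; decide

lemma gh_convex {i : ℕ} {f : Fin i → Fin 4} (hf : f ≠ fun _ => 0) :
    ConvexIn GAdj (gh f) := by
  apply convex_of_ab
  · have : ∃ j, f j ≠ 0 := by
      by_contra h
      push_neg at h
      exact hf (funext h)
    obtain ⟨j, hj⟩ := this
    have : (f j = 1 ∨ f j = 3) ∨ (f j = 2 ∨ f j = 3) := by
      revert hj; generalize f j = x; revert x; decide
    rcases this with h | h
    · exact ⟨GV.a j, ⟨j, Or.inl ⟨rfl, h⟩⟩⟩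
    · exact ⟨GV.b j, ⟨j, Or.inr ⟨rfl, h⟩⟩⟩
  · rintro v ⟨k, ⟨rfl, -⟩ | ⟨rfl, -⟩⟩ <;> exact ⟨fun h => (by cases h), fun h => (by cases h)⟩

lemma co_bound (i : ℕ) :
    4 ^ i - 1 ≤ {X : Set (GV i) | ConvexIn GAdj X}.ncard := by
  classical
  have hsub : gh '' ({fun _ => 0}ᶜ : Set (Fin i → Fin 4)) ⊆
      {X : Set (GV i) | ConvexIn GAdj X} := by
    rintro X ⟨f, hf, rfl⟩
    exact gh_convex hf
  have h1 : (gh '' ({fun _ => 0}ᶜ : Set (Fin i → Fin 4))).ncard ≤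
      {X : Set (GV i) | ConvexIn GAdj X}.ncard :=
    Set.ncard_le_ncard hsub (Set.toFinite _)
  have h2 : (gh '' ({fun _ => 0}ᶜ : Set (Fin i → Fin 4))).ncard =
      ({fun _ => 0}ᶜ : Set (Fin i → Fin 4)).ncard :=
    Set.ncard_image_of_injective _ gh_inj
  have h3 : ({fun _ => 0} : Set (Fin i → Fin 4)).ncard +
      ({fun _ => 0}ᶜ : Set (Fin i → Fin 4)).ncard = Nat.card (Fin i → Fin 4) := by
    rw [Set.ncard_add_ncard_compl]
  have h4 : Nat.card (Fin i → Fin 4) = 4 ^ i := by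
    simp [Nat.card_eq_fintype_card, Fintype.card_fun]
  have h5 : ({fun _ => 0} : Set (Fin i → Fin 4)).ncard = 1 := Set.ncard_singleton _
  omega

end Aux

open Filter in
/-- `G_i` has at most `2·3^i + 3i + 1` connected convex sets and at least
`4^i - 1` convex sets, so the ratio `cc(G_i)/co(G_i)` tends to `0`. -/
theorem stmt_13 :
    (∀ i : ℕ, 1 ≤ i →
      {X : Set (GV i) | ConnectedIn GAdj X ∧ ConvexIn GAdj X}.ncard ≤
        2 * 3 ^ i + 3 * i + 1) ∧
    (∀ i : ℕ, 1 ≤ i →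
      4 ^ i - 1 ≤ {X : Set (GV i) | ConvexIn GAdj X}.ncard) ∧
    Tendsto (fun i : ℕ =>
        ({X : Set (GV i) | ConnectedIn GAdj X ∧ ConvexIn GAdj X}.ncard : ℝ) /
          ({X : Set (GV i) | ConvexIn GAdj X}.ncard : ℝ))
      atTop (nhds 0) := by
  refine ⟨fun i _ => cc_bound i, fun i _ => co_bound i, ?_⟩
  apply tendsto_of_tendsto_of_tendsto_of_le_of_le' (g := fun _ : ℕ => (0:ℝ))
      (h := fun i : ℕ => 12 * (3/4 : ℝ) ^ i) tendsto_const_nhds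
  · have h := tendsto_pow_atTop_nhds_zero_of_lt_one (by norm_num : (0:ℝ) ≤ 3/4)
      (by norm_num : (3/4 : ℝ) < 1)
    simpa using h.const_mul (12 : ℝ)
  · exact Eventually.of_forall fun i => div_nonneg (Nat.cast_nonneg _) (Nat.cast_nonneg _)
  · filter_upwards [eventually_ge_atTop 1] with i hi
    have hcc : ({X : Set (GV i) | ConnectedIn GAdj X ∧ ConvexIn GAdj X}.ncard : ℝ) ≤
        2 * 3 ^ i + 3 * i + 1 := by exact_mod_cast cc_bound i
    have h4n : (1 : ℕ) ≤ 4 ^ i := Nat.one_le_pow _ _ (by norm_num)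
    have hd : (4 : ℝ) ^ i - 1 ≤ ({X : Set (GV i) | ConvexIn GAdj X}.ncard : ℝ) := by
      have := co_bound i
      have h' : ((4 ^ i - 1 : ℕ) : ℝ) = (4 : ℝ) ^ i - 1 := by
        rw [Nat.cast_sub h4n]; push_cast; ring
      rw [← h']
      exact_mod_cast this
    have h4 : (4 : ℝ) ≤ 4 ^ i := by
      calc (4 : ℝ) = 4 ^ 1 := (pow_one 4).symm
        _ ≤ 4 ^ i := pow_le_pow_right₀ (by norm_num) hi
    have hdpos : (0 : ℝ) < 4 ^ i - 1 := by linarith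
    have hi3 : (i : ℝ) < 3 ^ i := by
      exact_mod_cast Nat.lt_pow_self (n := i) (by norm_num : 1 < 3)
    have h3pos : (0 : ℝ) < 3 ^ i := by positivity
    have h31 : (1 : ℝ) ≤ 3 ^ i := by
      have : (1 : ℝ) ≤ i := by exact_mod_cast hi
      linarith
    calc ({X : Set (GV i) | ConnectedIn GAdj X ∧ ConvexIn GAdj X}.ncard : ℝ) /
          ({X : Set (GV i) | ConvexIn GAdj X}.ncard : ℝ)
        ≤ (2 * 3 ^ i + 3 * i + 1) / ((4 : ℝ) ^ i - 1) := by
          apply div_le_div₀ (by positivity) hcc hdpos hd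
      _ ≤ (6 * 3 ^ i) / ((4 : ℝ) ^ i / 2) := by
          apply div_le_div₀ (by positivity) (by linarith) (by positivity) (by linarith)
      _ = 12 * (3/4 : ℝ) ^ i := by
          rw [div_pow]; field_simp; ring
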